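/- For a prime p and m ≥ 1, a_3'(p^m) = (p^{2m}(p+1)^2 - p^{m+1})·(p-1)/p^3, where a_3'(k) = Σ_{d_1 d_2 d_3 = k} Π_{i=1}^3 Σ_{g|d_i} μ(g)(d_i/g)^{i-1}. -/

import Mathlib

open Finset ArithmeticFunction

/-- The set of n-tuples of positive integers with product k. -/
def tuples (n k : ℕ) : Finset (Fin n → ℕ) :=
  (Fintype.piFinset fun _ => k.divisors).filter fun d => ∏ i, d i = k

/-- a_n(k) = Σ_{d_1⋯d_n = k} d_1^0 d_2^1 ⋯ d_n^{n-1}. -/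
def an (n k : ℕ) : ℕ := ∑ d ∈ tuples n k, ∏ i : Fin n, d i ^ (i : ℕ)

/-- a_n'(k) = Σ_{d_1⋯d_n = k} Π_i Σ_{g ∣ d_i} μ(g) (d_i/g)^{i-1}. -/
def an' (n k : ℕ) : ℤ :=
  ∑ d ∈ tuples n k, ∏ i : Fin n,
    ∑ g ∈ (d i).divisors, moebius g * ((d i / g : ℕ) : ℤ) ^ (i : ℕ)

/-- The local factor. -/
def gg (p e j : ℕ) : ℤ := if e = 0 then 1 else (p : ℤ) ^ (e * j) - (p : ℤ) ^ ((e - 1) * j)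

lemma fact_pow {p : ℕ} (hp : p.Prime) (k : ℕ) : (p ^ k).factorization p = k := by
  rw [hp.factorization_pow]; simp

lemma gg_inner_sum {p : ℕ} (hp : p.Prime) (e j : ℕ) :
    (∑ g ∈ (p ^ e).divisors, (moebius g : ℤ) * (((p ^ e) / g : ℕ) : ℤ) ^ j) = gg p e j := by
  rcases Nat.eq_zero_or_pos e with rfl | he
  · simp [gg]
  rw [Nat.sum_divisors_prime_pow hp, gg, if_neg he.ne']
  have hsub : Finset.range 2 ⊆ Finset.range (e + 1) := by
    apply Finset.range_subset_range.mpr; omega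
  rw [← Finset.sum_subset hsub]
  · rw [Finset.sum_range_succ, Finset.sum_range_one]
    have h0 : p ^ e / p ^ 0 = p ^ e := by simp
    have h1 : p ^ e / p ^ 1 = p ^ (e - 1) := by
      rw [Nat.pow_div (by omega) hp.pos]
    rw [h0, h1]
    simp only [pow_zero, pow_one, moebius_apply_one, moebius_apply_prime hp]
    push_cast [← pow_mul]
    ring
  · intro i hi hni
    simp only [Finset.mem_range] at hi hni
    have : i ≠ 0 := by omega
    rw [moebius_apply_prime_pow hp this, if_neg (by omega)]
    simp

lemma an'_eq {p : ℕ} (hp : p.Prime) (m : ℕ) :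
    an' 3 (p ^ m) = ∑ e ∈ Finset.Nat.antidiagonalTuple 3 m, ∏ i : Fin 3, gg p (e i) i := by
  rw [an']
  refine Finset.sum_nbij' (i := fun d => fun i => (d i).factorization p)
    (j := fun e => fun i => p ^ e i) ?_ ?_ ?_ ?_ ?_
  · intro d hd
    simp only [tuples, Finset.mem_filter, Fintype.mem_piFinset, Nat.mem_divisors] at hd
    obtain ⟨hmem, hprod⟩ := hd
    have hrep : ∀ i, d i = p ^ ((d i).factorization p) := by
      intro i
      obtain ⟨k, hk, hdk⟩ := (Nat.dvd_prime_pow hp).mp (hmem i).1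
      rw [hdk, fact_pow hp]
    rw [Finset.Nat.mem_antidiagonalTuple]
    have : ∏ i, d i = p ^ (∑ i, (d i).factorization p) := by
      rw [← Finset.prod_pow_eq_pow_sum]
      exact Finset.prod_congr rfl fun i _ => hrep i
    rw [this] at hprod
    exact Nat.pow_right_injective hp.two_le hprod
  · intro e he
    rw [Finset.Nat.mem_antidiagonalTuple] at he
    simp only [tuples, Finset.mem_filter, Fintype.mem_piFinset, Nat.mem_divisors]
    refine ⟨fun i => ⟨pow_dvd_pow p ?_, pow_ne_zero _ hp.ne_zero⟩, ?_⟩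
    · rw [← he]; exact Finset.single_le_sum (f := fun i => e i) (fun _ _ => Nat.zero_le _)
        (Finset.mem_univ i)
    · rw [Finset.prod_pow_eq_pow_sum, he]
  · intro d hd
    simp only [tuples, Finset.mem_filter, Fintype.mem_piFinset, Nat.mem_divisors] at hd
    funext i
    dsimp only
    obtain ⟨k, hk, hdk⟩ := (Nat.dvd_prime_pow hp).mp (hd.1 i).1
    rw [hdk, fact_pow hp]
  · intro e he
    funext i
    dsimp only
    rw [fact_pow hp]
  · intro d hd
    simp only [tuples, Finset.mem_filter, Fintype.mem_piFinset, Nat.mem_divisors] at hd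
    refine Finset.prod_congr rfl fun i _ => ?_
    have hrep : d i = p ^ ((d i).factorization p) := by
      obtain ⟨k, hk, hdk⟩ := (Nat.dvd_prime_pow hp).mp (hd.1 i).1
      rw [hdk, fact_pow hp]
    dsimp only
    rw [← gg_inner_sum hp ((d i).factorization p) i, ← hrep]

lemma an'_eq2 {p : ℕ} (hp : p.Prime) (m : ℕ) :
    an' 3 (p ^ m) = ∑ b ∈ Finset.range (m + 1), gg p b 1 * gg p (m - b) 2 := by
  rw [an'_eq hp m]
  have key : ∑ e ∈ Finset.Nat.antidiagonalTuple 3 m, ∏ i : Fin 3, gg p (e i) i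
      = ∑ x ∈ Finset.HasAntidiagonal.antidiagonal m, gg p x.1 1 * gg p x.2 2 := by
    rw [← Finset.sum_filter_add_sum_filter_not _ (fun e => e 0 = 0)]
    have h2 : ∑ e ∈ (Finset.Nat.antidiagonalTuple 3 m).filter (fun e => ¬ e 0 = 0),
        ∏ i : Fin 3, gg p (e i) i = 0 := by
      apply Finset.sum_eq_zero
      intro e he
      simp only [Finset.mem_filter] at he
      rw [Fin.prod_univ_three, show ((0 : Fin 3) : ℕ) = 0 from rfl,
        show ((1 : Fin 3) : ℕ) = 1 from rfl, show ((2 : Fin 3) : ℕ) = 2 from rfl]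
      have : gg p (e 0) 0 = 0 := by
        rw [gg, if_neg he.2]
        simp
      rw [this, zero_mul, zero_mul]
    rw [h2, add_zero]
    refine Finset.sum_nbij' (i := fun e => (e 1, e 2))
      (j := fun x => ![0, x.1, x.2]) ?_ ?_ ?_ ?_ ?_
    · intro e he
      simp only [Finset.mem_filter, Finset.Nat.mem_antidiagonalTuple] at he
      rw [Finset.HasAntidiagonal.mem_antidiagonal]
      have := he.1
      rw [Fin.sum_univ_three] at this
      rw [he.2] at this
      simpa using this
    · intro x hx
      rw [Finset.HasAntidiagonal.mem_antidiagonal] at hx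
      simp only [Finset.mem_filter, Finset.Nat.mem_antidiagonalTuple, Fin.sum_univ_three]
      simp [hx]
    · intro e he
      simp only [Finset.mem_filter] at he
      funext i
      fin_cases i <;> simp [he.2]
    · intro x hx
      simp
    · intro e he
      simp only [Finset.mem_filter] at he
      rw [Fin.prod_univ_three, show ((0 : Fin 3) : ℕ) = 0 from rfl,
        show ((1 : Fin 3) : ℕ) = 1 from rfl, show ((2 : Fin 3) : ℕ) = 2 from rfl]
      have : gg p (e 0) 0 = 1 := by rw [he.2, gg, if_pos rfl]
      rw [this, one_mul]
  rw [key, Finset.Nat.sum_antidiagonal_eq_sum_range_succ_mk]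

lemma gg_cast (p e j : ℕ) :
    ((gg p e j : ℤ) : ℝ) = if e = 0 then 1 else (p : ℝ) ^ (e * j) - (p : ℝ) ^ ((e - 1) * j) := by
  rw [gg]; split_ifs <;> push_cast <;> ring

lemma gg_two_succ {p : ℕ} (c : ℕ) (hc : c ≠ 0) :
    gg p (c + 1) 2 = (p : ℤ) ^ 2 * gg p c 2 := by
  obtain ⟨k, rfl⟩ := Nat.exists_eq_succ_of_ne_zero hc
  simp only [gg, if_neg (Nat.succ_ne_zero _)]
  rw [show k + 1 + 1 - 1 = k + 1 from by omega, show k + 1 - 1 = k from by omega,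
    show (k + 1 + 1) * 2 = (k + 1) * 2 + 2 from by ring,
    show (k + 1) * 2 = k * 2 + 2 from by ring]
  rw [pow_add, pow_add]
  ring

lemma sum_closed {p : ℕ} (hp : p.Prime) (n : ℕ) :
    ((∑ b ∈ Finset.range (n + 2), gg p b 1 * gg p (n + 1 - b) 2 : ℤ) : ℝ) =
      ((p : ℝ) ^ (2 * (n + 1)) * ((p : ℝ) + 1) ^ 2 - (p : ℝ) ^ (n + 2)) * ((p : ℝ) - 1) /
        (p : ℝ) ^ 3 := by
  have hp0 : (p : ℝ) ≠ 0 := Nat.cast_ne_zero.mpr hp.ne_zero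
  induction n with
  | zero =>
    rw [Finset.sum_range_succ, Finset.sum_range_one]
    simp only [Nat.sub_self, Nat.sub_zero]
    push_cast [gg]
    norm_num
    field_simp
    ring
  | succ k ih =>
    have hg0 : gg p 0 2 = 1 := by simp [gg]
    have hg12 : gg p 1 2 = (p : ℤ) ^ 2 - 1 := by simp [gg]
    have hmid : (∑ b ∈ Finset.range (k + 2), gg p b 1 * gg p (k + 2 - b) 2 : ℤ)
        = (p : ℤ) ^ 2 * (∑ b ∈ Finset.range (k + 1), gg p b 1 * gg p (k + 1 - b) 2)
          + gg p (k + 1) 1 * ((p : ℤ) ^ 2 - 1) := by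
      rw [Finset.sum_range_succ, show k + 2 - (k + 1) = 1 from by omega, hg12, Finset.mul_sum]
      congr 1
      refine Finset.sum_congr rfl fun b hb => ?_
      rw [Finset.mem_range] at hb
      rw [show k + 2 - b = (k + 1 - b) + 1 from by omega, gg_two_succ _ (by omega)]
      ring
    have step : (∑ b ∈ Finset.range (k + 3), gg p b 1 * gg p (k + 2 - b) 2 : ℤ)
        = (p : ℤ) ^ 2 * (∑ b ∈ Finset.range (k + 2), gg p b 1 * gg p (k + 1 - b) 2)
          - gg p (k + 1) 1 + gg p (k + 2) 1 := by
      rw [Finset.sum_range_succ _ (k + 2), show k + 2 - (k + 2) = 0 from by omega, hg0, hmid,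
        Finset.sum_range_succ _ (k + 1), show k + 1 - (k + 1) = 0 from by omega, hg0]
      ring
    have hg1 : ((gg p (k + 1) 1 : ℤ) : ℝ) = (p : ℝ) ^ (k + 1) - (p : ℝ) ^ k := by
      rw [gg_cast, if_neg (Nat.succ_ne_zero _)]
      norm_num
    have hg2 : ((gg p (k + 2) 1 : ℤ) : ℝ) = (p : ℝ) ^ (k + 2) - (p : ℝ) ^ (k + 1) := by
      rw [gg_cast, if_neg (Nat.succ_ne_zero _)]
      norm_num
    rw [step]
    push_cast at ih ⊢
    rw [ih, hg1, hg2]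
    field_simp
    ring

theorem a3'_closed_form (p : ℕ) (hp : p.Prime) (m : ℕ) (hm : 1 ≤ m) :
    (an' 3 (p ^ m) : ℝ) =
      ((p : ℝ) ^ (2 * m) * ((p : ℝ) + 1) ^ 2 - (p : ℝ) ^ (m + 1)) * ((p : ℝ) - 1) /
        (p : ℝ) ^ 3 := by
  obtain ⟨n, rfl⟩ : ∃ n, m = n + 1 := ⟨m - 1, by omega⟩
  rw [an'_eq2 hp]
  exact sum_closed hp n
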